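/- If h ≥ 1 and k ≥ 0 are integers, then the wall of height (h+1)·⌈(k+1)^{1/2}⌉ contains k + 1 pairwise vertex-disjoint subgraphs each of which contains a wall of height h as a subgraph (up to isomorphism). -/

import Mathlib

open scoped Classical

/-- A finite loopless multigraph: `E` indexes edges, `ends e` gives the endpoints. -/
structure Multigraph (V : Type) (E : Type) where
  ends : E → Sym2 V
  loopless : ∀ e, ¬ (ends e).IsDiag

namespace Multigraph

variable {V E V1 E1 V2 E2 : Type}

/-- Multidegree: number of edges (with multiplicity) incident with `v`. -/
noncomputable def mdeg (G : Multigraph V E) [Fintype E] (v : V) : ℕ :=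
  (Finset.univ.filter (fun e => v ∈ G.ends e)).card

/-- Walks in a multigraph, remembering which edge instance is used at each step. -/
inductive Walk (G : Multigraph V E) : V → V → Type where
  | nil (v : V) : Walk G v v
  | cons {u v w : V} (e : E) (he : G.ends e = s(u, v)) (p : Walk G v w) : Walk G u w

namespace Walk

variable {G : Multigraph V E}

def support : {u v : V} → G.Walk u v → List V
  | u, _, .nil _ => [u]
  | u, _, .cons _ _ p => u :: p.support

def edges : {u v : V} → G.Walk u v → List E
  | _, _, .nil _ => []
  | _, _, .cons e _ p => e :: p.edges

/-- A walk is a path when its vertices are pairwise distinct. -/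
def IsPath {u v : V} (p : G.Walk u v) : Prop := p.support.Nodup

/-- The internal vertices of a walk (all vertices except the two endpoints). -/
def interior {u v : V} (p : G.Walk u v) : List V := p.support.tail.dropLast

end Walk

/-- An `H`-immersion model in `G`. -/
structure ImmersionModel (H : Multigraph V1 E1) (G : Multigraph V E) where
  vmap : V1 → V
  vmap_inj : Function.Injective vmap
  src : E1 → V1
  tgt : E1 → V1
  ends_eq : ∀ e, H.ends e = s(src e, tgt e)
  path : ∀ e, G.Walk (vmap (src e)) (vmap (tgt e))
  path_isPath : ∀ e, (path e).IsPath
  edge_disjoint : ∀ e₁ e₂, e₁ ≠ e₂ → ∀ x, x ∈ (path e₁).edges → x ∉ (path e₂).edges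

namespace ImmersionModel

variable {H : Multigraph V1 E1} {G : Multigraph V E}

/-- The edges of the immersion expansion associated with the model. -/
def edgeSet (m : ImmersionModel H G) : Set E := {x | ∃ e, x ∈ (m.path e).edges}

/-- The vertices of the immersion expansion associated with the model. -/
def vertSet (m : ImmersionModel H G) : Set V :=
  {x | (∃ a, m.vmap a = x) ∨ ∃ e, x ∈ (m.path e).support}

end ImmersionModel

/-- `G` contains `H` as an immersion. -/
def Immersed (H : Multigraph V1 E1) (G : Multigraph V E) : Prop :=
  Nonempty (ImmersionModel H G)

/-- Deleting a set of edges from a multigraph. -/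
def deleteEdges (G : Multigraph V E) (F : Set E) : Multigraph V {e : E // e ∉ F} where
  ends e := G.ends e.1
  loopless e := G.loopless e.1

/-- The minimum size of an `H`-cover of `G`: a set of edges meeting every
`H`-immersion expansion. (By convention `sInf ∅ = 0`.) -/
noncomputable def coverNum (H : Multigraph V1 E1) (G : Multigraph V E) : ℕ :=
  sInf {n | ∃ C : Finset E, ¬ Immersed H (G.deleteEdges ↑C) ∧ C.card = n}

/-- The maximum size of an `H`-packing in `G`: a collection of pairwise
edge-disjoint `H`-immersion expansions. -/
noncomputable def packNum (H : Multigraph V1 E1) (G : Multigraph V E) : ℕ :=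
  sSup {n | ∃ f : Fin n → ImmersionModel H G,
    ∀ i j, i ≠ j → Disjoint (f i).edgeSet (f j).edgeSet}

/-- Connectivity of a multigraph. -/
def Connected (G : Multigraph V E) : Prop :=
  Nonempty V ∧ ∀ u v : V, Nonempty (G.Walk u v)

/-- Reachability in `G` avoiding the vertex set `X`. -/
def ReachAvoid (G : Multigraph V E) (X : Set V) (u v : V) : Prop :=
  ∃ p : G.Walk u v, ∀ x ∈ p.support, x ∉ X

/-- The underlying simple graph of a multigraph. -/
def toSimple (G : Multigraph V E) : SimpleGraph V where
  Adj u v := u ≠ v ∧ ∃ e, G.ends e = s(u, v)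
  symm := by
    constructor
    rintro u v ⟨h, e, he⟩
    exact ⟨h.symm, e, by rw [he, Sym2.eq_swap]⟩
  loopless := ⟨fun v h => h.1 rfl⟩

end Multigraph

section Minor

/-- `A` is a minor of `B` (branch-set/minor-model definition). -/
def SimpleGraphMinorOf {α β : Type} (A : SimpleGraph α) (B : SimpleGraph β) : Prop :=
  ∃ C : α → Set β,
    (∀ a, (C a).Nonempty) ∧
    (∀ a, (B.induce (C a)).Connected) ∧
    (Pairwise fun a a' => Disjoint (C a) (C a')) ∧
    (∀ a a', A.Adj a a' → ∃ x ∈ C a, ∃ y ∈ C a', B.Adj x y)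

end Minor

namespace Multigraph

variable {V E : Type}

/-- Planarity of a loopless multigraph, via Wagner's theorem: no `K₅` and
no `K₃,₃` minor in the underlying simple graph. -/
def Planar (G : Multigraph V E) : Prop :=
  ¬ SimpleGraphMinorOf (SimpleGraph.completeGraph (Fin 5)) G.toSimple ∧
  ¬ SimpleGraphMinorOf (completeBipartiteGraph (Fin 3) (Fin 3)) G.toSimple

lemma isDiag_map_inl {α β : Type} (p : Sym2 α) :
    (p.map (Sum.inl : α → α ⊕ β)).IsDiag ↔ p.IsDiag := by
  induction p using Sym2.ind with
  | _ a b => simp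

/-- `G⁺`: attach to every vertex `v` a gadget of two new vertices `(v,false)`,
`(v,true)` joined by a double edge, each joined to `v` by a single edge. -/
def plus (G : Multigraph V E) :
    Multigraph (V ⊕ (V × Bool)) (E ⊕ ((V × Fin 2) ⊕ (V × Bool))) where
  ends
    | .inl e => (G.ends e).map .inl
    | .inr (.inl (v, _)) => s(.inr (v, false), .inr (v, true))
    | .inr (.inr (v, b)) => s(.inl v, .inr (v, b))
  loopless := by
    rintro (e | ⟨v, i⟩ | ⟨v, b⟩) h
    · exact G.loopless e ((isDiag_map_inl _).1 h)
    · simp at h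
    · simp at h

/-- `G*`: attach, at every vertex `v` and for every `i ∈ {1,…,mdeg v}`, a gadget of two
new vertices joined by a double edge, each joined to `v` by a single edge. -/
noncomputable def star (G : Multigraph V E) [Fintype E] :
    Multigraph (V ⊕ ((Σ v : V, Fin (G.mdeg v)) × Bool))
      (E ⊕ (((Σ v : V, Fin (G.mdeg v)) × Fin 2) ⊕ ((Σ v : V, Fin (G.mdeg v)) × Bool))) where
  ends
    | .inl e => (G.ends e).map .inl
    | .inr (.inl (p, _)) => s(.inr (p, false), .inr (p, true))
    | .inr (.inr (p, b)) => s(.inl p.1, .inr (p, b))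
  loopless := by
    rintro (e | ⟨p, i⟩ | ⟨p, b⟩) h
    · exact G.loopless e ((isDiag_map_inl _).1 h)
    · simp at h
    · simp at h

/-- The subdivision of `G` in which the edge `e` (oriented from `src e` to `tgt e`)
is subdivided `n e` times, i.e. replaced by a path with `n e` internal vertices. -/
def subdivide (G : Multigraph V E) (src tgt : E → V)
    (hst : ∀ e, G.ends e = s(src e, tgt e)) (n : E → ℕ) :
    Multigraph (V ⊕ (Σ e : E, Fin (n e))) (Σ e : E, Fin (n e + 1)) where
  ends := fun q =>
    s(if _ : q.2.val = 0 then Sum.inl (src q.1)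
        else Sum.inr ⟨q.1, ⟨q.2.val - 1, by have := q.2.isLt; omega⟩⟩,
      if _ : q.2.val = n q.1 then Sum.inl (tgt q.1)
        else Sum.inr ⟨q.1, ⟨q.2.val, by have := q.2.isLt; omega⟩⟩)
  loopless := by
    rintro ⟨e, i⟩ h
    rw [Sym2.mk_isDiag_iff] at h
    split_ifs at h with h1 h2 h2 <;>
      first
        | exact Sum.noConfusion h
        | (have hl := G.loopless e
           rw [hst e, Sym2.mk_isDiag_iff] at hl
           exact hl (Sum.inl.inj h))
        | (have h3 := Sum.inr.inj h
           dsimp only at h1 h3 ⊢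
           simp at h1 h3 <;> omega)

end Multigraph

namespace Multigraph

/-- The multigraph underlying a simple graph. -/
def ofSimple {α : Type} (S : SimpleGraph α) : Multigraph α S.edgeSet where
  ends e := e.1
  loopless e := S.not_isDiag_of_mem_edgeSet e.2

/-- A strong immersion model: additionally, no branch vertex is an internal
vertex of a certifying path. -/
structure StrongImmersionModel {V1 E1 V E : Type} (H : Multigraph V1 E1) (G : Multigraph V E)
    extends ImmersionModel H G where
  not_internal : ∀ (e : E1) (x : V1), vmap x ∉ (path e).interior

/-- An `H`-topological-minor model in `G`: certifying paths are internally
vertex-disjoint and their internal vertices avoid the branch vertices. -/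
structure TopMinorModel {V1 E1 V E : Type} (H : Multigraph V1 E1) (G : Multigraph V E) where
  vmap : V1 → V
  vmap_inj : Function.Injective vmap
  src : E1 → V1
  tgt : E1 → V1
  ends_eq : ∀ e, H.ends e = s(src e, tgt e)
  path : ∀ e, G.Walk (vmap (src e)) (vmap (tgt e))
  path_isPath : ∀ e, (path e).IsPath
  internal_disjoint : ∀ e₁ e₂, e₁ ≠ e₂ → ∀ x, x ∈ (path e₁).interior → x ∉ (path e₂).support
  internal_avoid : ∀ (e : E1) (x : V1), vmap x ∉ (path e).interior

end Multigraph

section Walls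

/-- The `m × n` grid graph. -/
def gridGraph (m n : ℕ) : SimpleGraph (Fin m × Fin n) where
  Adj p q := (p.1 = q.1 ∧ (p.2.val + 1 = q.2.val ∨ q.2.val + 1 = p.2.val)) ∨
             (p.2 = q.2 ∧ (p.1.val + 1 = q.1.val ∨ q.1.val + 1 = p.1.val))
  symm := by constructor; rintro p q (⟨h, h'⟩ | ⟨h, h'⟩) <;> [left; right] <;> exact ⟨h.symm, h'.symm⟩
  loopless := by constructor; rintro p (⟨-, h | h⟩ | ⟨-, h | h⟩) <;> omega

/-- The `k×k` grid `Γ_k` as a multigraph. -/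
def Gamma (k : ℕ) : Multigraph (Fin k × Fin k) (gridGraph k k).edgeSet :=
  Multigraph.ofSimple (gridGraph k k)

/-- The `(k+1) × (2k+2)` grid with the vertical edges `{(x,y),(x+1,y)}` with `x+y` odd
(in 1-indexed coordinates) removed. -/
def wallPre (k : ℕ) : SimpleGraph (Fin (k + 1) × Fin (2 * k + 2)) where
  Adj p q := (gridGraph (k + 1) (2 * k + 2)).Adj p q ∧
    ¬ (p.2 = q.2 ∧ (min p.1.val q.1.val + p.2.val) % 2 = 1)
  symm := by
    constructor
    rintro p q ⟨h, h'⟩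
    refine ⟨(gridGraph _ _).symm.symm _ _ h, fun ⟨hc, hp⟩ => h' ⟨hc.symm, ?_⟩⟩
    rw [Nat.min_comm] at hp
    rw [← hc]
    exact hp
  loopless := ⟨fun p h => (gridGraph _ _).loopless.irrefl p h.1⟩

/-- Degree of a vertex in `wallPre k`. -/
noncomputable def wallPreDeg (k : ℕ) (v : Fin (k + 1) × Fin (2 * k + 2)) : ℕ :=
  (Finset.univ.filter (fun w => (wallPre k).Adj v w)).card

/-- The vertex set of the `k`-wall: vertices of degree `≠ 1`. -/
def wallVerts (k : ℕ) : Set (Fin (k + 1) × Fin (2 * k + 2)) :=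
  {v | wallPreDeg k v ≠ 1}

/-- The `k`-wall `W_k`, as a simple graph. -/
noncomputable def wallSimple (k : ℕ) : SimpleGraph (wallVerts k) :=
  (wallPre k).induce (wallVerts k)

/-- The `k`-wall `W_k`, as a multigraph. -/
noncomputable def Wall (k : ℕ) : Multigraph (wallVerts k) (wallSimple k).edgeSet :=
  Multigraph.ofSimple (wallSimple k)

/-- The doubled edges of `W⁺_k`: the horizontal edges lying on both a vertical and a
horizontal path of the wall, i.e. those whose lower column index is odd (1-indexed). -/
def isDoubledEdge (k : ℕ) (p : Sym2 (wallVerts k)) : Prop :=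
  ∃ a b : wallVerts k, p = s(a, b) ∧ (a : Fin (k + 1) × Fin (2 * k + 2)).1 = (b : Fin (k + 1) × Fin (2 * k + 2)).1 ∧
    (b : Fin (k + 1) × Fin (2 * k + 2)).2.val = (a : Fin (k + 1) × Fin (2 * k + 2)).2.val + 1 ∧
    (a : Fin (k + 1) × Fin (2 * k + 2)).2.val % 2 = 0

/-- `W⁺_k`: the `k`-wall with a second parallel copy of every doubled edge. -/
noncomputable def WallPlus (k : ℕ) :
    Multigraph (wallVerts k)
      ((wallSimple k).edgeSet ⊕ {p : Sym2 (wallVerts k) // p ∈ (wallSimple k).edgeSet ∧ isDoubledEdge k p}) where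
  ends
    | .inl e => e.1
    | .inr e => e.1
  loopless := by
    rintro (e | e)
    · exact (wallSimple k).not_isDiag_of_mem_edgeSet e.2
    · exact (wallSimple k).not_isDiag_of_mem_edgeSet e.2.1

end Walls

namespace Multigraph

variable {V E : Type}

/-- Tree-partition width of a multigraph (bags may be empty; w.l.o.g. bags are
indexed by the vertices themselves). -/
noncomputable def tpw (G : Multigraph V E) [Fintype V] [Fintype E] : ℕ :=
  sInf {w | ∃ T : SimpleGraph V, T.IsTree ∧ ∃ bag : V → V,
    (Fintype.card V = 1 ∨
      ∀ (e : E) (a b : V), G.ends e = s(a, b) → bag a = bag b ∨ T.Adj (bag a) (bag b)) ∧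
    (∀ t : V, (Finset.univ.filter (fun v => bag v = t)).card ≤ w) ∧
    (∀ t t' : V, T.Adj t t' →
      (Finset.univ.filter (fun e : E =>
        ∃ a b, G.ends e = s(a, b) ∧ bag a = t ∧ bag b = t')).card ≤ w)}

section ThreeCenter

variable {W : Type} [Fintype W]

/-- Degree of `v` in the state `(A, m)`: `A` is the set of remaining vertices and
`m` gives edge multiplicities. -/
noncomputable def stDeg (A : Finset W) (m : Sym2 W → ℕ) (v : W) : ℕ :=
  ∑ w ∈ A.erase v, m s(v, w)

/-- One reduction step of the 3-center construction relative to the marked set `X`: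
delete a vertex of degree one, or suppress (dissolve) a vertex of degree two not in `X`. -/
inductive CStep (X : Set W) :
    Finset W × (Sym2 W → ℕ) → Finset W × (Sym2 W → ℕ) → Prop
  | delete (A : Finset W) (m : Sym2 W → ℕ) (v : W) (hv : v ∈ A) (hd : stDeg A m v = 1) :
      CStep X (A, m) (A.erase v, fun p => if v ∈ p then 0 else m p)
  | suppress (A : Finset W) (m : Sym2 W → ℕ) (v a b : W) (hv : v ∈ A) (hx : v ∉ X)
      (ha : a ∈ A) (hb : b ∈ A) (hav : a ≠ v) (hbv : b ≠ v) (hd : stDeg A m v = 2)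
      (h1 : 1 ≤ m s(v, a)) (h2 : a = b → m s(v, a) = 2) (h3 : a ≠ b → 1 ≤ m s(v, b)) :
      CStep X (A, m) (A.erase v,
        fun p => if v ∈ p then 0 else if a ≠ b ∧ p = s(a, b) then m p + 1 else m p)

/-- The number of vertices of the 3-center of the marked multigraph given by the
state `(A, m)` with marked set `X`: the size of a reduct on which no step applies. -/
noncomputable def centerSize (X : Set W) (A : Finset W) (m : Sym2 W → ℕ) : ℕ :=
  sInf {c | ∃ s : Finset W × (Sym2 W → ℕ),
    Relation.ReflTransGen (CStep X) (A, m) s ∧ (∀ s', ¬ CStep X s s') ∧ s.1.card = c}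

end ThreeCenter

section TCW

variable {n : ℕ}

/-- The consolidation map for the torso at node `t` of a tree-cut decomposition:
a vertex whose bag is `t` is kept, and any other vertex is sent to the peripheral
vertex indexed by the neighbour `u` of `t` whose branch contains its bag. -/
noncomputable def consMap (T : SimpleGraph (Fin n)) (bag : V → Fin n) (t : Fin n) (a : V) :
    V ⊕ Fin n :=
  if bag a = t then Sum.inl a
  else if h : ∃ u, T.Adj t u ∧ (T.deleteEdges {s(t, u)}).Reachable (bag a) u
    then Sum.inr h.choose else Sum.inl a

/-- The vertex set of the torso at `t`: the bag of `t` together with one peripheral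
vertex for each neighbour of `t` in the decomposition tree. -/
noncomputable def torsoA [Fintype V] (T : SimpleGraph (Fin n)) (bag : V → Fin n) (t : Fin n) :
    Finset (V ⊕ Fin n) :=
  (Finset.univ.filter (fun a : V => bag a = t)).image Sum.inl ∪
    (Finset.univ.filter (fun u : Fin n => T.Adj t u)).image Sum.inr

/-- The edge multiplicities of the torso at `t`. -/
noncomputable def torsoM (G : Multigraph V E) [Fintype E] (T : SimpleGraph (Fin n))
    (bag : V → Fin n) (t : Fin n) : Sym2 (V ⊕ Fin n) → ℕ :=
  fun p => if p.IsDiag then 0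
    else (Finset.univ.filter (fun e : E => (G.ends e).map (consMap T bag t) = p)).card

/-- The adhesion of the tree edge `{t, t'}`: the number of edges of `G` whose endpoints
lie in bags on different sides of the edge. -/
noncomputable def adhE (G : Multigraph V E) [Fintype E] (T : SimpleGraph (Fin n))
    (bag : V → Fin n) (t t' : Fin n) : ℕ :=
  (Finset.univ.filter (fun e : E => ∃ a b, G.ends e = s(a, b) ∧
    (T.deleteEdges {s(t, t')}).Reachable (bag a) t ∧
    (T.deleteEdges {s(t, t')}).Reachable (bag b) t')).card

/-- Tree-cut width of a multigraph: the minimum, over tree-cut decompositions, of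
the maximum of all adhesions and of the numbers of vertices of the 3-centers
of the torsos. -/
noncomputable def tcw (G : Multigraph V E) [Fintype V] [Fintype E] : ℕ :=
  sInf {w | ∃ (n : ℕ) (T : SimpleGraph (Fin n)), T.IsTree ∧ ∃ bag : V → Fin n,
    (∀ t t', T.Adj t t' → adhE G T bag t t' ≤ w) ∧
    (∀ t, centerSize (Sum.inl '' {a | bag a = t}) (torsoA T bag t) (torsoM G T bag t) ≤ w)}

end TCW

end Multigraph

namespace WallDisjointAux

/-- Embedding of the small grid into the big grid with row offset `A`, column offset `B`. -/
def emb (h R A B : ℕ) (hA : A + h ≤ R) (hB : B + 2 * h + 1 ≤ 2 * R + 1)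
    (v : Fin (h + 1) × Fin (2 * h + 2)) : Fin (R + 1) × Fin (2 * R + 2) :=
  (⟨v.1.val + A, by have := v.1.isLt; omega⟩, ⟨v.2.val + B, by have := v.2.isLt; omega⟩)

lemma emb_adj {h R A B : ℕ} (hA : A + h ≤ R) (hB : B + 2 * h + 1 ≤ 2 * R + 1)
    (hpar : B % 2 = A % 2) {v w : Fin (h + 1) × Fin (2 * h + 2)}
    (hadj : (wallPre h).Adj v w) :
    (wallPre R).Adj (emb h R A B hA hB v) (emb h R A B hA hB w) := by
  simp only [wallPre, gridGraph, emb, Fin.ext_iff, true_and, and_true] at hadj ⊢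
  omega

lemma emb_injective {h R A B : ℕ} (hA : A + h ≤ R) (hB : B + 2 * h + 1 ≤ 2 * R + 1) :
    Function.Injective (emb h R A B hA hB) := by
  rintro ⟨a1, a2⟩ ⟨b1, b2⟩ hab
  simp only [emb, Prod.mk.injEq, Fin.ext_iff] at hab ⊢
  omega

lemma exists_adj (h : ℕ) (v : Fin (h + 1) × Fin (2 * h + 2)) :
    ∃ w, (wallPre h).Adj v w := by
  by_cases h0 : v.2.val = 0
  · refine ⟨(v.1, ⟨1, by omega⟩), ?_⟩
    simp only [wallPre, gridGraph, Fin.ext_iff, true_and, and_true]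
    omega
  · refine ⟨(v.1, ⟨v.2.val - 1, by have := v.2.isLt; omega⟩), ?_⟩
    simp only [wallPre, gridGraph, Fin.ext_iff, true_and, and_true]
    omega

lemma one_le_deg (h : ℕ) (v : Fin (h + 1) × Fin (2 * h + 2)) : 1 ≤ wallPreDeg h v := by
  obtain ⟨w, hw⟩ := exists_adj h v
  have hmem : w ∈ Finset.univ.filter (fun w => (wallPre h).Adj v w) := by simp [hw]
  have := Finset.card_pos.mpr ⟨w, hmem⟩
  unfold wallPreDeg
  omega

lemma emb_mem {h R A B : ℕ} (hA : A + h ≤ R) (hB : B + 2 * h + 1 ≤ 2 * R + 1)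
    (hpar : B % 2 = A % 2) {v : Fin (h + 1) × Fin (2 * h + 2)} (hv : v ∈ wallVerts h) :
    emb h R A B hA hB v ∈ wallVerts R := by
  have h1 := one_le_deg h v
  have h2 : wallPreDeg h v ≤ wallPreDeg R (emb h R A B hA hB v) := by
    unfold wallPreDeg
    apply Finset.card_le_card_of_injOn (emb h R A B hA hB)
    · intro w hw
      simp only [Finset.mem_coe, Finset.mem_filter, Finset.mem_univ, true_and] at hw ⊢
      exact emb_adj hA hB hpar hw
    · exact fun a _ b _ hab => emb_injective hA hB hab
  have h3 : wallPreDeg h v ≠ 1 := hv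
  show wallPreDeg R (emb h R A B hA hB v) ≠ 1
  omega

lemma block_ne {c x y u v : ℕ} (hxy : x ≠ y) (hu : u ≤ c) (hv : v ≤ c) :
    u + x * (c + 1) ≠ v + y * (c + 1) := by
  have aux : ∀ x y u v : ℕ, x < y → u ≤ c → v ≤ c → u + x * (c + 1) ≠ v + y * (c + 1) := by
    intro x y u v hlt hu hv
    have h1 : (x + 1) * (c + 1) ≤ y * (c + 1) := Nat.mul_le_mul_right _ (by omega)
    have h2 : (x + 1) * (c + 1) = x * (c + 1) + c + 1 := by ring
    omega
  rcases Nat.lt_or_ge x y with hlt | hge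
  · exact aux x y u v hlt hu hv
  · have hlt : y < x := by omega
    exact fun e => aux y x v u hlt hv hu e.symm

lemma main_bounds (h s P Q : ℕ) (hP : P < s) (hQ : Q < s) :
    P * (h + 1) + h ≤ (h + 1) * s ∧
    (Q * (2 * h + 2) + P * (h + 1) % 2) + 2 * h + 1 ≤ 2 * ((h + 1) * s) + 1 ∧
    (Q * (2 * h + 2) + P * (h + 1) % 2) % 2 = P * (h + 1) % 2 := by
  have h2 : (P + 1) * (h + 1) ≤ s * (h + 1) := Nat.mul_le_mul_right _ (by omega)
  have h3 : (P + 1) * (h + 1) = P * (h + 1) + h + 1 := by ring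
  have h4 : s * (h + 1) = (h + 1) * s := Nat.mul_comm _ _
  have h5 : (Q + 1) * (2 * h + 2) ≤ s * (2 * h + 2) := Nat.mul_le_mul_right _ (by omega)
  have h6 : (Q + 1) * (2 * h + 2) = Q * (2 * h + 2) + 2 * h + 2 := by ring
  have h7 : s * (2 * h + 2) = 2 * ((h + 1) * s) := by ring
  have h8 : Q * (2 * h + 2) = 2 * (Q * (h + 1)) := by ring
  refine ⟨by omega, by omega, by omega⟩

end WallDisjointAux


/-- The wall of height `(h+1)·⌈√(k+1)⌉` contains `k+1` pairwise
vertex-disjoint subgraphs, each containing a copy of the wall of height `h`. -/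
theorem wall_contains_disjoint_walls (h k s : ℕ) (hh : 1 ≤ h)
    (hs : s = if Nat.sqrt (k + 1) * Nat.sqrt (k + 1) = k + 1
      then Nat.sqrt (k + 1) else Nat.sqrt (k + 1) + 1) :
    ∃ f : Fin (k + 1) → (wallVerts h → wallVerts ((h + 1) * s)),
      (∀ i, Function.Injective (f i)) ∧
      (∀ i a b, (wallSimple h).Adj a b → (wallSimple ((h + 1) * s)).Adj (f i a) (f i b)) ∧
      (∀ i j, i ≠ j → ∀ a b, f i a ≠ f j b) := by
  classical
  have hs1 : 1 ≤ s := by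
    have h1 : 0 < Nat.sqrt (k + 1) := Nat.sqrt_pos.mpr (by omega)
    rw [hs]; split_ifs <;> omega
  have hks : k + 1 ≤ s * s := by
    rw [hs]; split_ifs with hsq
    · omega
    · have h2 := Nat.lt_succ_sqrt (k + 1)
      simp only [Nat.succ_eq_add_one] at h2
      omega
  have hPlt : ∀ i : Fin (k + 1), i.val / s < s := by
    intro i
    rw [Nat.div_lt_iff_lt_mul (by omega : 0 < s)]
    have := i.isLt
    omega
  have hQlt : ∀ i : Fin (k + 1), i.val % s < s := fun i => Nat.mod_lt _ (by omega)
  have bnds := fun i : Fin (k + 1) =>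
    WallDisjointAux.main_bounds h s (i.val / s) (i.val % s) (hPlt i) (hQlt i)
  refine ⟨fun i v => ⟨WallDisjointAux.emb h ((h + 1) * s)
      ((i.val / s) * (h + 1))
      ((i.val % s) * (2 * h + 2) + (i.val / s) * (h + 1) % 2)
      (bnds i).1 (bnds i).2.1 v.1,
      WallDisjointAux.emb_mem (bnds i).1 (bnds i).2.1 (bnds i).2.2 v.2⟩, ?_, ?_, ?_⟩
  · intro i a b hab
    exact Subtype.ext (WallDisjointAux.emb_injective (bnds i).1 (bnds i).2.1
      (congrArg Subtype.val hab))
  · intro i a b hab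
    exact WallDisjointAux.emb_adj (bnds i).1 (bnds i).2.1 (bnds i).2.2 hab
  · intro i j hij a b hcon
    have hcc := congrArg Subtype.val hcon
    simp only [WallDisjointAux.emb, Prod.mk.injEq, Fin.mk.injEq] at hcc
    have key : ∀ Pi Qi Pj Qj : ℕ, s * Pi + Qi = i.val → s * Pj + Qj = j.val →
        a.1.1.val + Pi * (h + 1) = b.1.1.val + Pj * (h + 1) →
        a.1.2.val + (Qi * (2 * h + 2) + Pi * (h + 1) % 2)
          = b.1.2.val + (Qj * (2 * h + 2) + Pj * (h + 1) % 2) → False := by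
      intro Pi Qi Pj Qj hi hj hrow hcol
      by_cases hP : Pi = Pj
      · by_cases hq : Qi = Qj
        · apply hij; apply Fin.ext; rw [hP, hq] at hi; omega
        · have hε : Pi * (h + 1) % 2 = Pj * (h + 1) % 2 := by rw [hP]
          have hne := WallDisjointAux.block_ne (c := 2 * h + 1) hq
            (by have := a.1.2.isLt; omega : a.1.2.val ≤ 2 * h + 1)
            (by have := b.1.2.isLt; omega : b.1.2.val ≤ 2 * h + 1)
          have he1 : Qi * (2 * h + 1 + 1) = Qi * (2 * h + 2) := by ring
          have he2 : Qj * (2 * h + 1 + 1) = Qj * (2 * h + 2) := by ring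
          omega
      · have hne := WallDisjointAux.block_ne (c := h) hP
          (by have := a.1.1.isLt; omega : a.1.1.val ≤ h)
          (by have := b.1.1.isLt; omega : b.1.1.val ≤ h)
        exact hne hrow
    exact key (i.val / s) (i.val % s) (j.val / s) (j.val % s)
      (Nat.div_add_mod i.val s) (Nat.div_add_mod j.val s) hcc.1 hcc.2
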